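/- Let s, r ≥ 2 be integers. Then: (i) if M is an integer such that every 2-coloring of the 2-chains of the Boolean lattice B_M contains an (s+r)-cap in color 1 or an r-cup in color 2, then every 2-coloring of the 2-chains of B_M contains an s-diamond in color 1 or an r-cup in color 2 (so BR^2(⋄_s, ∨_r) ≤ BR^2(∧_{s+r}, ∨_r)); and (ii) for N = ⌈log_{3/2}(2r + s − 1)⌉, every 2-coloring of the 2-chains of B_N contains an s-diamond in color 1 or an r-cup in color 2 (so BR^2(⋄_s, ∨_r) ≤ ⌈log_{3/2}(2r + s − 1)⌉). -/
import Mathlib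


/-- An `r`-cup in color `i` for a coloring `c` of the 2-chains of a poset `Q`. -/
def IsCup {Q : Type*} [Preorder Q] {κ : Type*} (c : Q → Q → κ) (i : κ) (r : ℕ) : Prop :=
  ∃ (X : Q) (Y : Fin r → Q),
    Function.Injective Y ∧ ∀ k, X < Y k ∧ c X (Y k) = i

/-- An `s`-cap in color `i` for a coloring `c` of the 2-chains of a poset `Q`. -/
def IsCap {Q : Type*} [Preorder Q] {κ : Type*} (c : Q → Q → κ) (i : κ) (s : ℕ) : Prop :=
  ∃ (Y : Q) (X : Fin s → Q),
    Function.Injective X ∧ ∀ k, X k < Y ∧ c (X k) Y = i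

/-- An `s`-diamond in color `i` for a coloring `c` of the 2-chains of a poset `Q`. -/
def IsDiamond {Q : Type*} [Preorder Q] {κ : Type*} (c : Q → Q → κ) (i : κ) (s : ℕ) : Prop :=
  ∃ (x z : Q) (y : Fin s → Q),
    Function.Injective y ∧
    ∀ k, x < y k ∧ y k < z ∧ c x (y k) = i ∧ c (y k) z = i

lemma extract_fin {α : Type*} {s : Finset α} {n : ℕ} (h : n ≤ s.card) :
    ∃ f : Fin n → α, Function.Injective f ∧ ∀ k, f k ∈ s := by
  obtain ⟨t, hts, htc⟩ := Finset.exists_subset_card_eq h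
  refine ⟨fun k => (t.equivFin.symm (Fin.cast htc.symm k) : α), ?_, ?_⟩
  · intro i j hij
    have h2 := t.equivFin.symm.injective (Subtype.coe_injective hij)
    simpa [Fin.ext_iff] using congrArg Fin.val h2
  · intro k; exact hts (t.equivFin.symm _).2

lemma sum_two_pow_card {α : Type*} [DecidableEq α] (s : Finset α) :
    ∑ t ∈ s.powerset, 2 ^ t.card = 3 ^ s.card := by
  induction s using Finset.induction with
  | empty => simp
  | @insert a s ha ih =>
    rw [Finset.sum_powerset_insert ha]
    have h2 : ∀ t ∈ s.powerset, 2 ^ (insert a t).card = 2 * 2 ^ t.card := by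
      intro t ht
      rw [Finset.card_insert_of_notMem (fun h => ha (Finset.mem_powerset.1 ht h)), pow_succ]
      ring
    rw [Finset.sum_congr rfl h2, ← Finset.mul_sum, ih,
      Finset.card_insert_of_notMem ha, pow_succ]
    ring

lemma capcup {N a' b' : ℕ}
    (h : (a' + b' + 1) * 2 ^ N < 3 ^ N)
    (c : Finset (Fin N) → Finset (Fin N) → Fin 2) :
    IsCap c 0 (a' + 1) ∨ IsCup c 1 (b' + 1) := by
  by_contra hcon
  push_neg at hcon
  obtain ⟨hcap, hcup⟩ := hcon
  have hcardP : (Finset.univ : Finset (Finset (Fin N))).card = 2 ^ N := by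
    simp [Finset.card_univ, Fintype.card_finset]
  set S0 : Finset (Finset (Fin N) × Finset (Fin N)) :=
    Finset.univ.filter (fun p => p.1 < p.2 ∧ c p.1 p.2 = 0) with hS0
  set S1 : Finset (Finset (Fin N) × Finset (Fin N)) :=
    Finset.univ.filter (fun p => p.1 < p.2 ∧ c p.1 p.2 = 1) with hS1
  set S : Finset (Finset (Fin N) × Finset (Fin N)) := Finset.univ.filter (fun p => p.1 < p.2) with hS
  set T : Finset (Finset (Fin N) × Finset (Fin N)) := Finset.univ.filter (fun p => p.1 ⊆ p.2) with hT
  -- fibers of S0 by second coordinate are small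
  have hfib0 : ∀ X : Finset (Fin N), (S0.filter (fun p => p.2 = X)).card ≤ a' := by
    intro X
    by_contra hbig
    push_neg at hbig
    obtain ⟨f, hfinj, hfmem⟩ := extract_fin hbig
    refine hcap ⟨X, fun k => (f k).1, ?_, ?_⟩
    · intro i j hij
      have hi := hfmem i; have hj := hfmem j
      simp only [hS0, Finset.mem_filter, Finset.mem_univ, true_and] at hi hj
      exact hfinj (Prod.ext hij (hi.2.trans hj.2.symm))
    · intro k
      have hk := hfmem k
      simp only [hS0, Finset.mem_filter, Finset.mem_univ, true_and] at hk
      rw [← hk.2]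
      exact ⟨hk.1.1, hk.1.2⟩
  have hfib1 : ∀ X : Finset (Fin N), (S1.filter (fun p => p.1 = X)).card ≤ b' := by
    intro X
    by_contra hbig
    push_neg at hbig
    obtain ⟨f, hfinj, hfmem⟩ := extract_fin hbig
    refine hcup ⟨X, fun k => (f k).2, ?_, ?_⟩
    · intro i j hij
      have hi := hfmem i; have hj := hfmem j
      simp only [hS1, Finset.mem_filter, Finset.mem_univ, true_and] at hi hj
      exact hfinj (Prod.ext (hi.2.trans hj.2.symm) hij)
    · intro k
      have hk := hfmem k
      simp only [hS1, Finset.mem_filter, Finset.mem_univ, true_and] at hk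
      rw [← hk.2]
      exact ⟨hk.1.1, hk.1.2⟩
  have hcard0 : S0.card ≤ a' * 2 ^ N := by
    rw [Finset.card_eq_sum_card_fiberwise
      (f := Prod.snd) (t := Finset.univ) (fun x _ => Finset.mem_univ _)]
    calc ∑ X ∈ (Finset.univ : Finset (Finset (Fin N))), (S0.filter (fun p => p.2 = X)).card
        ≤ ∑ _X ∈ (Finset.univ : Finset (Finset (Fin N))), a' := Finset.sum_le_sum (fun X _ => hfib0 X)
      _ = a' * 2 ^ N := by rw [Finset.sum_const, hcardP, smul_eq_mul, mul_comm]
  have hcard1 : S1.card ≤ b' * 2 ^ N := by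
    rw [Finset.card_eq_sum_card_fiberwise
      (f := Prod.fst) (t := Finset.univ) (fun x _ => Finset.mem_univ _)]
    calc ∑ X ∈ (Finset.univ : Finset (Finset (Fin N))), (S1.filter (fun p => p.1 = X)).card
        ≤ ∑ _X ∈ (Finset.univ : Finset (Finset (Fin N))), b' := Finset.sum_le_sum (fun X _ => hfib1 X)
      _ = b' * 2 ^ N := by rw [Finset.sum_const, hcardP, smul_eq_mul, mul_comm]
  -- split S by color
  have hsplit : S0.card + S1.card = S.card := by
    have e0 : S0 = S.filter (fun p => c p.1 p.2 = 0) := by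
      ext p; simp [hS0, hS, Finset.mem_filter, and_assoc]
    have e1 : S1 = S.filter (fun p => ¬ c p.1 p.2 = 0) := by
      have key : ∀ x : Fin 2, x = 1 ↔ ¬ x = 0 := by decide
      ext p; simp [hS1, hS, Finset.mem_filter, and_assoc, key]
    rw [e0, e1, Finset.card_filter_add_card_filter_not]
  -- count T
  have hTcard : T.card = 3 ^ N := by
    rw [Finset.card_eq_sum_card_fiberwise
      (f := Prod.snd) (t := Finset.univ) (fun x _ => Finset.mem_univ _)]
    have hf : ∀ X : Finset (Fin N), (T.filter (fun p => p.2 = X)).card = 2 ^ X.card := by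
      intro X
      rw [← Finset.card_powerset]
      apply Finset.card_bij (fun p _ => p.1)
      · intro p hp
        simp only [hT, Finset.mem_filter, Finset.mem_univ, true_and] at hp
        exact Finset.mem_powerset.2 (hp.2 ▸ hp.1)
      · intro p hp q hq hpq
        simp only [hT, Finset.mem_filter, Finset.mem_univ, true_and] at hp hq
        exact Prod.ext hpq (hp.2.trans hq.2.symm)
      · intro Z hZ
        refine ⟨(Z, X), ?_, rfl⟩
        simp only [hT, Finset.mem_filter, Finset.mem_univ, true_and]
        exact ⟨Finset.mem_powerset.1 hZ, trivial⟩
    rw [Finset.sum_congr rfl (fun X _ => hf X)]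
    rw [← Finset.powerset_univ, sum_two_pow_card]
    simp
  -- diagonal
  have hDcard : (T.filter (fun p => p.1 = p.2)).card = 2 ^ N := by
    rw [← hcardP]
    apply Finset.card_bij (fun p _ => p.1)
    · intro p _; exact Finset.mem_univ _
    · intro p hp q hq hpq
      simp only [Finset.mem_filter] at hp hq
      exact Prod.ext hpq (hp.2 ▸ hq.2 ▸ hpq)
    · intro X _
      refine ⟨(X, X), ?_, rfl⟩
      simp only [Finset.mem_filter, hT, Finset.mem_univ, true_and]
      exact ⟨Finset.Subset.refl X, trivial⟩
  have hSeq : S = T.filter (fun p => ¬ p.1 = p.2) := by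
    ext p
    simp only [hS, hT, Finset.mem_filter, Finset.mem_univ, true_and]
    constructor
    · intro hlt
      exact ⟨le_of_lt hlt, ne_of_lt hlt⟩
    · intro ⟨hle, hne⟩
      exact lt_of_le_of_ne hle hne
  have hST : (T.filter (fun p => p.1 = p.2)).card + S.card = T.card := by
    rw [hSeq, Finset.card_filter_add_card_filter_not]
  have hfinal : 3 ^ N ≤ (a' + b' + 1) * 2 ^ N := by
    have h1 : 3 ^ N = 2 ^ N + S.card := by omega
    have h2 : S.card ≤ a' * 2 ^ N + b' * 2 ^ N := by omega
    calc 3 ^ N = 2 ^ N + S.card := h1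
      _ ≤ 2 ^ N + (a' * 2 ^ N + b' * 2 ^ N) := by omega
      _ = (a' + b' + 1) * 2 ^ N := by ring
  omega

lemma cap_to_diamond {s r M : ℕ}
    (c : Finset (Fin M) → Finset (Fin M) → Fin 2)
    (h : IsCap c 0 (s + r)) : IsDiamond c 0 s ∨ IsCup c 1 r := by
  obtain ⟨Y, X, hX, hXY⟩ := h
  set F0 : Finset (Fin (s + r)) :=
    Finset.univ.filter (fun k => (∅ : Finset (Fin M)) < X k ∧ c ∅ (X k) = 0) with hF0
  set F1 : Finset (Fin (s + r)) :=
    Finset.univ.filter (fun k => (∅ : Finset (Fin M)) < X k ∧ c ∅ (X k) = 1) with hF1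
  set FE : Finset (Fin (s + r)) :=
    Finset.univ.filter (fun k => X k = ∅) with hFE
  have hFEcard : FE.card ≤ 1 := by
    apply Finset.card_le_one.2
    intro i hi j hj
    simp only [hFE, Finset.mem_filter] at hi hj
    exact hX (hi.2.trans hj.2.symm)
  have hcover : Finset.univ ⊆ F0 ∪ F1 ∪ FE := by
    intro k _
    simp only [hF0, hF1, hFE, Finset.mem_union, Finset.mem_filter, Finset.mem_univ, true_and]
    by_cases he : X k = ∅
    · exact Or.inr he
    · have hlt : (∅ : Finset (Fin M)) < X k := by
        rw [Finset.lt_iff_ssubset, Finset.ssubset_iff_subset_ne]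
        exact ⟨Finset.empty_subset _, fun h' => he h'.symm⟩
      have : c ∅ (X k) = 0 ∨ c ∅ (X k) = 1 := by
        have : ∀ x : Fin 2, x = 0 ∨ x = 1 := by decide
        exact this _
      rcases this with h0 | h1
      · exact Or.inl (Or.inl ⟨hlt, h0⟩)
      · exact Or.inl (Or.inr ⟨hlt, h1⟩)
  have hcards : s + r ≤ F0.card + F1.card + FE.card := by
    calc s + r = (Finset.univ : Finset (Fin (s + r))).card := by simp
      _ ≤ (F0 ∪ F1 ∪ FE).card := Finset.card_le_card hcover
      _ ≤ (F0 ∪ F1).card + FE.card := Finset.card_union_le _ _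
      _ ≤ F0.card + F1.card + FE.card := by
          exact Nat.add_le_add_right (Finset.card_union_le _ _) _
  by_cases hc : s ≤ F0.card
  · left
    obtain ⟨f, hfinj, hfmem⟩ := extract_fin hc
    refine ⟨∅, Y, fun k => X (f k), hX.comp hfinj, ?_⟩
    intro k
    have hk := hfmem k
    simp only [hF0, Finset.mem_filter, Finset.mem_univ, true_and] at hk
    exact ⟨hk.1, (hXY (f k)).1, hk.2, (hXY (f k)).2⟩
  · right
    have hc1 : r ≤ F1.card := by omega
    obtain ⟨f, hfinj, hfmem⟩ := extract_fin hc1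
    refine ⟨∅, fun k => X (f k), hX.comp hfinj, ?_⟩
    intro k
    have hk := hfmem k
    simp only [hF1, Finset.mem_filter, Finset.mem_univ, true_and] at hk
    exact ⟨hk.1, hk.2⟩

lemma numeric {s r N : ℕ} (hs : 2 ≤ s) (hr : 2 ≤ r)
    (hN : (N : ℤ) = ⌈Real.logb (3 / 2) (2 * (r : ℝ) + (s : ℝ) - 1)⌉) :
    (2 * r + s - 1) * 2 ^ N < 3 ^ N := by
  set x : ℝ := 2 * (r : ℝ) + (s : ℝ) - 1 with hx
  have hr' : (2 : ℝ) ≤ (r : ℝ) := by exact_mod_cast hr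
  have hs' : (2 : ℝ) ≤ (s : ℝ) := by exact_mod_cast hs
  have hx5 : (5 : ℝ) ≤ x := by rw [hx]; linarith
  have hle : Real.logb (3 / 2) x ≤ (N : ℝ) := by
    have h1 := Int.le_ceil (Real.logb (3 / 2) x)
    rw [← hN] at h1
    exact_mod_cast h1
  have hub : x ≤ (3 / 2 : ℝ) ^ N := by
    calc x = (3 / 2 : ℝ) ^ (Real.logb (3 / 2) x) :=
          (Real.rpow_logb (by norm_num) (by norm_num) (by linarith)).symm
      _ ≤ (3 / 2 : ℝ) ^ ((N : ℝ)) := Real.rpow_le_rpow_of_exponent_le (by norm_num) hle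
      _ = (3 / 2 : ℝ) ^ N := Real.rpow_natCast _ N
  have h2pos : (0 : ℝ) < 2 ^ N := by positivity
  have hmul : x * 2 ^ N ≤ 3 ^ N := by
    rw [div_pow] at hub
    calc x * 2 ^ N ≤ ((3 : ℝ) ^ N / 2 ^ N) * 2 ^ N := by
          exact mul_le_mul_of_nonneg_right hub (le_of_lt h2pos)
      _ = 3 ^ N := by field_simp
  have hxnat : ((2 * r + s - 1 : ℕ) : ℝ) = x := by
    have h1 : (1 : ℕ) ≤ 2 * r + s := by omega
    push_cast [Nat.cast_sub h1]
    rw [hx]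
    try ring
  have hnat : (2 * r + s - 1) * 2 ^ N ≤ 3 ^ N := by
    have := hmul
    rw [← hxnat] at this
    exact_mod_cast this
  have hne : (2 * r + s - 1) * 2 ^ N ≠ 3 ^ N := by
    intro heq
    rcases Nat.eq_zero_or_pos N with h0 | hpos
    · rw [h0] at heq; simp at heq; omega
    · have hdvd : 2 ∣ 3 ^ N := by
        rw [← heq]
        exact Dvd.dvd.mul_left (dvd_pow_self 2 (by omega : N ≠ 0)) _
      have := Nat.Prime.dvd_of_dvd_pow Nat.prime_two hdvd
      norm_num at this
  exact lt_of_le_of_ne hnat hne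

/-- for `s, r ≥ 2`:
(i) `BR^2(⋄_s, ∨_r) ≤ BR^2(∧_{s+r}, ∨_r)`: if every 2-coloring of the 2-chains of
`B_M` contains an `(s+r)`-cap in color `0` or an `r`-cup in color `1`, then every
2-coloring of the 2-chains of `B_M` contains an `s`-diamond in color `0` or an
`r`-cup in color `1`;
(ii) for `N = ⌈log_{3/2}(2r + s − 1)⌉`, every 2-coloring of the 2-chains of `B_N`
contains an `s`-diamond in color `0` or an `r`-cup in color `1`. -/
theorem boolean_ramsey_diamond_vs_cup
    (s r : ℕ) (hs : 2 ≤ s) (hr : 2 ≤ r) :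
    (∀ M : ℕ,
      (∀ c : Finset (Fin M) → Finset (Fin M) → Fin 2,
        IsCap c 0 (s + r) ∨ IsCup c 1 r) →
      (∀ c : Finset (Fin M) → Finset (Fin M) → Fin 2,
        IsDiamond c 0 s ∨ IsCup c 1 r)) ∧
    (∀ N : ℕ, (N : ℤ) = ⌈Real.logb (3 / 2) (2 * (r : ℝ) + (s : ℝ) - 1)⌉ →
      ∀ c : Finset (Fin N) → Finset (Fin N) → Fin 2,
        IsDiamond c 0 s ∨ IsCup c 1 r) := by
  refine ⟨?_, ?_⟩
  · intro M hM c
    rcases hM c with hcap | hcup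
    · exact cap_to_diamond c hcap
    · exact Or.inr hcup
  · intro N hN c
    have hnum := numeric hs hr hN
    have h' : (s + r - 1 + (r - 1) + 1) * 2 ^ N < 3 ^ N := by
      have e : s + r - 1 + (r - 1) + 1 = 2 * r + s - 1 := by omega
      rw [e]; exact hnum
    have hcc := capcup h' c
    have e1 : s + r - 1 + 1 = s + r := by omega
    have e2 : r - 1 + 1 = r := by omega
    rw [e1, e2] at hcc
    rcases hcc with hcap | hcup
    · exact cap_to_diamond c hcap
    · exact Or.inr hcup
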